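/- For every n ≥ 2 and every vertex v of the complete graph K_n, Σ_{T spanning tree of K_n} 2^{deg_T(v)} = 2·(n+1)^{n−2}, where deg_T(v) denotes the degree of v in the tree T. Equivalently, this sum equals the number of spanning trees of K_{n+1} containing a fixed edge. -/

import Mathlib

open SimpleGraph Finset Walk

namespace PruferAux

variable {V : Type*} [DecidableEq V]

-- assume A.lean defs inline for testing
def addLeaf (G : SimpleGraph V) (w : V) : SimpleGraph (Option V) where
  Adj x y := match x, y with
    | some a, some b => G.Adj a b
    | some a, none => a = w
    | none, some b => b = w
    | none, none => False
  symm := ⟨by rintro (_ | a) (_ | b) h <;> simp_all; exact h.symm⟩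
  loopless := ⟨by rintro (_ | a) h <;> simp_all⟩

lemma end_mem_tail_support_of_not_nil {H : SimpleGraph V} {u v : V} {p : H.Walk u v}
    (h : ¬ p.Nil) : v ∈ p.support.tail := by
  cases p with
  | nil => exact absurd Walk.Nil.nil h
  | cons h' q => simpa using q.end_mem_support

lemma not_mem_path_support {H : SimpleGraph V} {l w : V} (hadj : ∀ x, H.Adj l x ↔ x = w)
    {a b : V} (ha : a ≠ l) (hb : b ≠ l) (p : H.Walk a b) (hp : p.IsPath) :
    l ∉ p.support := by
  intro h
  have hspec := p.take_spec h
  have hnd : p.support.Nodup := hp.support_nodup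
  have hsupp : p.support = (p.takeUntil l h).support ++ (p.dropUntil l h).support.tail := by
    conv_lhs => rw [← hspec]
    exact support_append _ _
  have hdisj := List.disjoint_of_nodup_append (hsupp ▸ hnd)
  -- w is in the support of takeUntil
  obtain ⟨y, hy, q1, hq1⟩ := exists_eq_cons_of_ne (Ne.symm ha) (p.takeUntil l h).reverse
  have hyw : y = w := (hadj y).mp hy
  have hw1 : w ∈ (p.takeUntil l h).support := by
    have : w ∈ (p.takeUntil l h).reverse.support := by
      rw [hq1, support_cons]
      exact List.mem_cons_of_mem _ (hyw ▸ q1.start_mem_support)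
    rwa [support_reverse, List.mem_reverse] at this
  -- w is in the tail of the support of dropUntil
  obtain ⟨y2, hy2, q2, hq2⟩ := exists_eq_cons_of_ne (Ne.symm hb) (p.dropUntil l h)
  have hy2w : y2 = w := (hadj y2).mp hy2
  have hw2 : w ∈ (p.dropUntil l h).support.tail := by
    rw [hq2, support_cons, List.tail_cons]
    exact hy2w ▸ q2.start_mem_support
  exact hdisj hw1 hw2

lemma not_mem_cycle_support {H : SimpleGraph V} {l w : V} (hadj : ∀ x, H.Adj l x ↔ x = w)
    {a : V} (c : H.Walk a a) (hc : c.IsCycle) : l ∉ c.support := by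
  intro h
  have hc' : (c.rotate l h).IsCycle := hc.rotate h
  set c' := c.rotate l h with hc'def
  clear_value c'
  cases c' with
  | nil => exact hc'.ne_nil rfl
  | @cons _ y _ h1 r =>
    have hlyne : l ≠ y := fun hh => H.loopless.irrefl l (hh ▸ h1)
    have hrlen : 2 ≤ r.length := by
      have := hc'.three_le_length
      simp only [length_cons] at this
      omega
    -- r : Walk y l ; show its support is not nodup
    obtain ⟨y2, hy2, q2, hq2⟩ := exists_eq_cons_of_ne hlyne r.reverse
    have hy2y : y2 = y := by
      rw [(hadj y2).mp hy2]
      exact ((hadj y).mp h1).symm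
    have hq2nil : ¬ q2.Nil := by
      rw [nil_iff_length_eq]
      have : r.reverse.length = r.length := length_reverse r
      rw [hq2, length_cons] at this
      omega
    have hq2nd : ¬ q2.support.Nodup := by
      intro hnd
      subst hy2y
      have hend : y2 ∈ q2.support.tail := end_mem_tail_support_of_not_nil hq2nil
      rw [q2.support_eq_cons] at hnd
      exact (List.nodup_cons.mp hnd).1 hend
    have hrnd : r.support.Nodup := by
      have := hc'.2
      simpa [support_cons] using this
    apply hq2nd
    have : r.reverse.support.Nodup := by rwa [support_reverse, List.nodup_reverse]
    rw [hq2, support_cons] at this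
    exact this.of_cons


lemma exists_pull {H : SimpleGraph (Option V)} :
    ∀ {x y : Option V} (p : H.Walk x y), none ∉ p.support → ∀ (a b : V), x = some a → y = some b →
      ∃ q : (H.comap some).Walk a b,
        q.support.map some = p.support ∧ q.edges.map (Sym2.map some) = p.edges := by
  intro x y p
  induction p with
  | nil =>
    rintro _ a b rfl hb
    obtain rfl : a = b := by injection hb
    exact ⟨Walk.nil, by simp, by simp⟩
  | @cons u z y h p ih =>
    intro hn a b ha hb
    subst ha
    have hz : z ∈ (Walk.cons h p).support := by
      simp [support_cons, p.start_mem_support]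
    obtain ⟨c, rfl⟩ : ∃ c, z = some c := by
      cases z with
      | none => exact absurd hz hn
      | some c => exact ⟨c, rfl⟩
    have hn' : none ∉ p.support := fun hh => hn (by simp [support_cons, hh])
    obtain ⟨q, hq1, hq2⟩ := ih hn' c b rfl hb
    exact ⟨Walk.cons (show (H.comap some).Adj a c from h) q, by simp [support_cons, hq1], by simp [edges_cons, hq2]⟩


variable {G : SimpleGraph V} {w : V}

@[simp] lemma addLeaf_adj_some_some {a b : V} :
    (addLeaf G w).Adj (some a) (some b) ↔ G.Adj a b := Iff.rfl

@[simp] lemma addLeaf_adj_none_some {b : V} :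
    (addLeaf G w).Adj none (some b) ↔ b = w := Iff.rfl

@[simp] lemma addLeaf_adj_some_none {a : V} :
    (addLeaf G w).Adj (some a) none ↔ a = w := Iff.rfl

@[simp] lemma addLeaf_adj_none_none : ¬ (addLeaf G w).Adj none none := fun h => h

@[simp] lemma addLeaf_comap_some : (addLeaf G w).comap some = G := by
  ext a b; rfl

lemma addLeaf_adj_none_iff {x : Option V} : (addLeaf G w).Adj none x ↔ x = some w := by
  cases x <;> simp

lemma addLeaf_isTree (h : G.IsTree) : (addLeaf G w).IsTree := by
  constructor
  · have hr : ∀ a : V, (addLeaf G w).Reachable (some w) (some a) :=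
      fun a => Reachable.map (⟨some, fun hab => hab⟩ : G →g addLeaf G w)
        (h.isConnected.preconnected w a)
    have hpre : (addLeaf G w).Preconnected := by
      intro x y
      match x, y with
      | none, none => rfl
      | none, some b => exact (Adj.reachable (by simp)).trans (hr b)
      | some a, none => exact ((Adj.reachable (by simp)).trans (hr a)).symm
      | some a, some b => exact (hr a).symm.trans (hr b)
    have : Nonempty (Option V) := ⟨none⟩
    exact Connected.mk hpre
  · intro x c hc
    have hnone : none ∉ c.support := not_mem_cycle_support (fun _ => addLeaf_adj_none_iff) c hc
    obtain ⟨a, rfl⟩ : ∃ a, x = some a := by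
      cases x with
      | none => exact absurd c.start_mem_support hnone
      | some a => exact ⟨a, rfl⟩
    obtain ⟨q, hq1, hq2⟩ := exists_pull c hnone a a rfl rfl
    have hacyc : ((addLeaf G w).comap some).IsAcyclic := by
      rw [addLeaf_comap_some]; exact h.IsAcyclic
    refine hacyc q ?_
    have h3 := hc.three_le_length
    rw [Walk.isCycle_def, Walk.isTrail_def] at hc ⊢
    refine ⟨?_, ?_, ?_⟩
    · have := hc.1
      rw [← hq2] at this
      exact this.of_map
    · intro hnil
      have hql : q.length = c.length := by
        have := congrArg List.length hq2
        rwa [List.length_map, length_edges, length_edges] at this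
      rw [hnil] at hql
      simp only [length_nil] at hql
      omega
    · have hts : c.support.tail = q.support.tail.map some := by
        rw [← hq1, List.map_tail]
      have := hc.2.2
      rw [hts] at this
      exact this.of_map


lemma eq_addLeaf {H : SimpleGraph (Option V)} {w : V}
    (hadj : ∀ x, H.Adj none x ↔ x = some w) : H = addLeaf (H.comap some) w := by
  ext x y
  match x, y with
  | none, none => simp
  | none, some b => simpa using hadj (some b)
  | some a, none =>
    rw [adj_comm]
    simpa [eq_comm, adj_comm] using hadj (some a)
  | some a, some b => rfl

lemma comap_some_isTree {H : SimpleGraph (Option V)} {w : V} (h : H.IsTree)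
    (hadj : ∀ x, H.Adj none x ↔ x = some w) : (H.comap some).IsTree := by
  constructor
  · have : Nonempty V := ⟨w⟩
    refine Connected.mk fun a b => ?_
    obtain ⟨p0⟩ := h.isConnected.preconnected (some a) (some b)
    obtain ⟨p, hp⟩ := p0.toPath
    have hnone : none ∉ (p : H.Walk _ _).support :=
      not_mem_path_support hadj (by simp) (by simp) p hp
    obtain ⟨q, _, _⟩ := exists_pull (p : H.Walk _ _) hnone a b rfl rfl
    exact ⟨q⟩
  · intro a q hq
    exact h.IsAcyclic (q.map (⟨some, fun hab => hab⟩ : H.comap some →g H))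
      (hq.map (Option.some_injective V))

lemma ncard_neighborSet_eq_degree {U : Type*} [Fintype U] (G : SimpleGraph U)
    [DecidableRel G.Adj] (v : U) : (G.neighborSet v).ncard = G.degree v := by
  rw [Set.ncard_eq_toFinset_card']
  rfl

lemma addLeaf_neighborSet_none : (addLeaf G w).neighborSet none = {some w} := by
  ext x
  cases x <;> simp [neighborSet]

lemma ncard_addLeaf_none : ((addLeaf G w).neighborSet none).ncard = 1 := by
  rw [addLeaf_neighborSet_none, Set.ncard_singleton]

lemma addLeaf_neighborSet_some_ne {x : V} (hx : x ≠ w) :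
    (addLeaf G w).neighborSet (some x) = some '' G.neighborSet x := by
  ext y
  cases y <;> simp [neighborSet, hx]

lemma addLeaf_neighborSet_some_eq :
    (addLeaf G w).neighborSet (some w) = insert none (some '' G.neighborSet w) := by
  ext y
  cases y <;> simp [neighborSet]

lemma ncard_addLeaf_some [Finite V] (x : V) :
    ((addLeaf G w).neighborSet (some x)).ncard
      = (G.neighborSet x).ncard + (if x = w then 1 else 0) := by
  rcases eq_or_ne x w with rfl | hx
  · rw [addLeaf_neighborSet_some_eq, if_pos rfl,
      Set.ncard_insert_of_notMem (by simp) (Set.Finite.image _ (Set.toFinite _)),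
      Set.ncard_image_of_injective _ (Option.some_injective V)]
  · rw [addLeaf_neighborSet_some_ne hx, if_neg hx,
      Set.ncard_image_of_injective _ (Option.some_injective V), add_zero]

lemma ncard_comap_equiv {U W : Type*} (e : U ≃ W) (H : SimpleGraph W) (x : U) :
    ((H.comap (e : U → W)).neighborSet x).ncard = (H.neighborSet (e x)).ncard := by
  have hset : (H.comap (e : U → W)).neighborSet x = e ⁻¹' (H.neighborSet (e x)) := rfl
  rw [hset, ← Equiv.image_symm_eq_preimage,
    Set.ncard_image_of_injective _ e.symm.injective]

lemma exists_unique_nbr_of_ncard_one {U : Type*} {H : SimpleGraph U} {v : U}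
    (h : (H.neighborSet v).ncard = 1) : ∃ w, ∀ x, H.Adj v x ↔ x = w := by
  obtain ⟨w, hw⟩ := Set.ncard_eq_one.mp h
  refine ⟨w, fun x => ?_⟩
  constructor
  · intro hx
    have : x ∈ H.neighborSet v := hx
    rw [hw] at this
    exact this
  · intro hx
    rw [hx]
    have : w ∈ H.neighborSet v := by rw [hw]; exact Set.mem_singleton _
    exact this

lemma degree_pos_of_tree {U : Type*} [Fintype U] {T : SimpleGraph U} (h : T.IsTree)
    (hcard : 2 ≤ Fintype.card U) (v : U) : 1 ≤ (T.neighborSet v).ncard := by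
  obtain ⟨u, hu⟩ := Fintype.exists_ne_of_one_lt_card (by omega) v
  obtain ⟨p⟩ := h.isConnected.preconnected v u
  obtain ⟨y, hy, q, hq⟩ := Walk.exists_eq_cons_of_ne (Ne.symm hu) p
  have : y ∈ T.neighborSet v := hy
  exact (Set.ncard_pos (Set.toFinite _)).mpr ⟨y, this⟩

lemma exists_leaf {U : Type*} [Fintype U] [DecidableEq U] {T : SimpleGraph U} (h : T.IsTree)
    (hcard : 2 ≤ Fintype.card U) : ∃ v, (T.neighborSet v).ncard = 1 := by
  classical
  by_contra hno
  push_neg at hno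
  have h2 : ∀ v, 2 ≤ T.degree v := by
    intro v
    have h1 := degree_pos_of_tree h hcard v
    have hne := hno v
    rw [ncard_neighborSet_eq_degree] at h1 hne
    omega
  have hsum := T.sum_degrees_eq_twice_card_edges
  have hbound : 2 * Fintype.card U ≤ ∑ v, T.degree v := by
    calc 2 * Fintype.card U = ∑ _v : U, 2 := by
          rw [Finset.sum_const, card_univ, smul_eq_mul, mul_comm]
      _ ≤ ∑ v, T.degree v := Finset.sum_le_sum fun v _ => h2 v
  have hedge := h.card_edgeFinset
  omega

lemma isTree_of_iso {U W : Type*} {G : SimpleGraph U} {H : SimpleGraph W} (e : G ≃g H)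
    (h : H.IsTree) : G.IsTree := by
  refine ⟨e.connected_iff.mpr h.isConnected, ?_⟩
  intro a c hc
  exact h.IsAcyclic (c.map e.toHom) (hc.map e.injective)

lemma isTree_comap_equiv {U W : Type*} (e : U ≃ W) {H : SimpleGraph W} (h : H.IsTree) :
    (H.comap (e : U → W)).IsTree :=
  isTree_of_iso ⟨e, Iff.rfl⟩ h

lemma comap_equiv_symm_comap {U W : Type*} (e : U ≃ W) (H : SimpleGraph W) :
    (H.comap (e : U → W)).comap (e.symm : W → U) = H := by
  ext a b
  show H.Adj (e (e.symm a)) (e (e.symm b)) ↔ H.Adj a b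
  rw [e.apply_symm_apply, e.apply_symm_apply]

lemma top_fin2_isTree : (⊤ : SimpleGraph (Fin 2)).IsTree := by
  constructor
  · refine Connected.mk fun a b => ?_
    rcases eq_or_ne a b with rfl | h
    · rfl
    · exact Adj.reachable h
  · intro a c hc
    have h3 := hc.three_le_length
    have hnd := hc.2
    have hlen : c.support.tail.length = c.length := by
      have := c.length_support
      have ht : c.support.tail.length + 1 = c.support.length := by
        rw [c.support_eq_cons]; rfl
      omega
    have := hnd.length_le_card
    simp only [hlen, Fintype.card_fin] at this
    omega

lemma isTree_fin2 {T : SimpleGraph (Fin 2)} (h : T.IsTree) : T = ⊤ := by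
  have h01 : T.Adj 0 1 := by
    obtain ⟨p⟩ := h.isConnected.preconnected 0 1
    obtain ⟨y, hy, q, hq⟩ := Walk.exists_eq_cons_of_ne (by decide) p
    fin_cases y
    · exact absurd rfl hy.ne
    · exact hy
  ext a b
  simp only [top_adj]
  constructor
  · exact Adj.ne
  · intro hab
    fin_cases a <;> fin_cases b <;> first
      | exact absurd rfl hab
      | exact h01
      | exact h01.symm

/-! ### the decoding of Prüfer sequences -/

def mmin {n : ℕ} (s : Fin (n+1) → Fin (n+3)) : Fin (n+3) :=
  (image s univ)ᶜ.min' (by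
    rw [← Finset.card_pos, Finset.card_compl]
    have h1 : (image s univ).card ≤ n + 1 := card_image_le.trans (by simp)
    have h2 : Fintype.card (Fin (n+3)) = n + 3 := by simp
    omega)

lemma mmin_not_mem {n : ℕ} (s : Fin (n+1) → Fin (n+3)) : ∀ i, s i ≠ mmin s := by
  have := Finset.min'_mem (image s univ)ᶜ (by
    rw [← Finset.card_pos, Finset.card_compl]
    have h1 : (image s univ).card ≤ n + 1 := card_image_le.trans (by simp)
    have h2 : Fintype.card (Fin (n+3)) = n + 3 := by simp
    omega)
  rw [Finset.mem_compl, Finset.mem_image] at this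
  push_neg at this
  exact fun i => this i (mem_univ i)

lemma mmin_le {n : ℕ} (s : Fin (n+1) → Fin (n+3)) {x : Fin (n+3)}
    (hx : ∀ i, s i ≠ x) : mmin s ≤ x :=
  Finset.min'_le _ _ (by
    rw [Finset.mem_compl, Finset.mem_image]
    push_neg
    exact fun i _ => hx i)

def down {m : ℕ} (l x : Fin (m+2)) : Fin (m+1) := (finSuccEquiv' l x).getD 0

lemma finSuccEquiv'_eq_some {m : ℕ} {l x : Fin (m+2)} (h : x ≠ l) :
    finSuccEquiv' l x = some (down l x) := by
  rcases he : finSuccEquiv' l x with _ | j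
  · exfalso
    apply h
    have := congrArg (finSuccEquiv' l).symm he
    rwa [Equiv.symm_apply_apply, finSuccEquiv'_symm_none] at this
  · rw [down, he]
    rfl

lemma succAbove_down {m : ℕ} {l x : Fin (m+2)} (h : x ≠ l) :
    l.succAbove (down l x) = x := by
  have := congrArg (finSuccEquiv' l).symm (finSuccEquiv'_eq_some h)
  rw [Equiv.symm_apply_apply, finSuccEquiv'_symm_some] at this
  exact this.symm

lemma down_succAbove {m : ℕ} (l : Fin (m+2)) (j : Fin (m+1)) :
    down l (l.succAbove j) = j := by
  rw [down, finSuccEquiv'_succAbove]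
  rfl

lemma down_inj {m : ℕ} {l x y : Fin (m+2)} (hx : x ≠ l) (hy : y ≠ l)
    (h : down l x = down l y) : x = y := by
  rw [← succAbove_down hx, ← succAbove_down hy, h]

def decode : (n : ℕ) → (Fin n → Fin (n+2)) → SimpleGraph (Fin (n+2))
  | 0, _ => ⊤
  | (n+1), s =>
    (addLeaf (decode n (fun i => down (mmin s) (s i.succ))) (down (mmin s) (s 0))).comap
      (finSuccEquiv' (mmin s))


lemma decode_succ {n : ℕ} (s : Fin (n+1) → Fin (n+3)) :
    decode (n+1) s =
      (addLeaf (decode n (fun i => down (mmin s) (s i.succ))) (down (mmin s) (s 0))).comap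
        (finSuccEquiv' (mmin s)) := rfl

theorem decode_props : ∀ n : ℕ,
    (∀ s, (decode n s).IsTree)
  ∧ (∀ s v, ((decode n s).neighborSet v).ncard = 1 + (univ.filter fun i => s i = v).card)
  ∧ (∀ s t, decode n s = decode n t → s = t)
  ∧ (∀ T : SimpleGraph (Fin (n+2)), T.IsTree → ∃ s, decode n s = T) := by
  intro n
  induction n with
  | zero =>
    refine ⟨fun s => top_fin2_isTree, fun s v => ?_, fun s t _ => funext fun i => i.elim0,
      fun T hT => ⟨fun i => i.elim0, (isTree_fin2 hT).symm⟩⟩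
    have hempty : (univ.filter fun i : Fin 0 => s i = v) = ∅ := by
      apply Finset.eq_empty_of_forall_notMem
      exact fun i => i.elim0
    rw [hempty]
    simp only [Finset.card_empty, add_zero]
    show ((⊤ : SimpleGraph (Fin 2)).neighborSet v).ncard = 1
    fin_cases v <;> simp only []
    · have hns : (⊤ : SimpleGraph (Fin 2)).neighborSet 0 = {1} := by
        ext u
        simp only [mem_neighborSet, top_adj, Set.mem_singleton_iff]
        omega
      simp only [show ((fun i => i) (⟨0, by omega⟩ : Fin 2) : Fin 2) = 0 from rfl]
      rw [hns, Set.ncard_singleton]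
    · have hns : (⊤ : SimpleGraph (Fin 2)).neighborSet 1 = {0} := by
        ext u
        simp only [mem_neighborSet, top_adj, Set.mem_singleton_iff]
        omega
      rw [show (⟨1, by omega⟩ : Fin 2) = 1 from rfl, hns, Set.ncard_singleton]
  | succ n ih =>
    obtain ⟨ih1, ih2, ih3, ih4⟩ := ih
    have h1 : ∀ s, (decode (n+1) s).IsTree := by
      intro s
      rw [decode_succ]
      exact isTree_comap_equiv _ (addLeaf_isTree (ih1 _))
    have h2 : ∀ s (v : Fin (n+3)), ((decode (n+1) s).neighborSet v).ncard
        = 1 + (univ.filter fun i => s i = v).card := by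
      intro s v
      rw [decode_succ, ncard_comap_equiv (finSuccEquiv' (mmin s))]
      rcases eq_or_ne v (mmin s) with rfl | hv
      · rw [finSuccEquiv'_at, ncard_addLeaf_none]
        have hemp : (univ.filter fun i => s i = mmin s) = ∅ := by
          apply Finset.eq_empty_of_forall_notMem
          intro i hi
          rw [Finset.mem_filter] at hi
          exact mmin_not_mem s i hi.2
        rw [hemp]
        simp
      · rw [finSuccEquiv'_eq_some hv, ncard_addLeaf_some, ih2]
        have hiff0 : (s 0 = v) ↔ (down (mmin s) v = down (mmin s) (s 0)) := by
          constructor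
          · intro h; rw [h]
          · intro h
            exact (down_inj hv (mmin_not_mem s 0) h).symm
        have hiffi : ∀ i : Fin n, (s i.succ = v)
            ↔ (down (mmin s) (s i.succ) = down (mmin s) v) := by
          intro i
          constructor
          · intro h; rw [h]
          · intro h
            exact down_inj (mmin_not_mem s i.succ) hv h
        rw [Finset.card_filter, Finset.card_filter, Fin.sum_univ_succ]
        have e1 : (if down (mmin s) v = down (mmin s) (s 0) then 1 else 0)
            = (if s 0 = v then 1 else 0) := by
          rw [if_congr hiff0.symm rfl rfl]
        have e2 : ∀ i : Fin n, (if down (mmin s) (s i.succ) = down (mmin s) v then (1:ℕ) else 0)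
            = (if s i.succ = v then 1 else 0) := by
          intro i
          rw [if_congr (hiffi i).symm rfl rfl]
        have e3 : (∑ i : Fin n, if down (mmin s) (s i.succ) = down (mmin s) v then (1:ℕ) else 0)
            = ∑ i : Fin n, if s i.succ = v then 1 else 0 :=
          Finset.sum_congr rfl fun i _ => e2 i
        rw [e1, e3]
        ring
    have h3 : ∀ s t, decode (n+1) s = decode (n+1) t → s = t := by
      intro s t h
      have himg : image s univ = image t univ := by
        ext x
        simp only [Finset.mem_image]
        have hs := h2 s x
        have ht := h2 t x
        rw [h] at hs
        have hcard : (univ.filter fun i => s i = x).card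
            = (univ.filter fun i => t i = x).card := by omega
        constructor
        · rintro ⟨i, _, hi⟩
          have : 0 < (univ.filter fun i => t i = x).card := by
            rw [← hcard, Finset.card_pos]
            exact ⟨i, Finset.mem_filter.mpr ⟨mem_univ i, hi⟩⟩
          obtain ⟨j, hj⟩ := Finset.card_pos.mp this
          exact ⟨j, mem_univ j, (Finset.mem_filter.mp hj).2⟩
        · rintro ⟨i, _, hi⟩
          have : 0 < (univ.filter fun i => s i = x).card := by
            rw [hcard, Finset.card_pos]
            exact ⟨i, Finset.mem_filter.mpr ⟨mem_univ i, hi⟩⟩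
          obtain ⟨j, hj⟩ := Finset.card_pos.mp this
          exact ⟨j, mem_univ j, (Finset.mem_filter.mp hj).2⟩
      have hm : mmin s = mmin t := by
        simp only [mmin, himg]
      have key : addLeaf (decode n (fun i => down (mmin s) (s i.succ))) (down (mmin s) (s 0))
          = addLeaf (decode n (fun i => down (mmin s) (t i.succ))) (down (mmin s) (t 0)) := by
        have hc := congrArg (SimpleGraph.comap ((finSuccEquiv' (mmin s)).symm : _ → _)) h
        rw [decode_succ, decode_succ, ← hm] at hc
        rwa [comap_equiv_symm_comap, comap_equiv_symm_comap] at hc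
      have hG : decode n (fun i => down (mmin s) (s i.succ))
          = decode n (fun i => down (mmin s) (t i.succ)) := by
        have := congrArg (SimpleGraph.comap (some : Fin (n+2) → Option (Fin (n+2)))) key
        rwa [addLeaf_comap_some, addLeaf_comap_some] at this
      have hw : down (mmin s) (s 0) = down (mmin s) (t 0) := by
        have htrue : (addLeaf (decode n (fun i => down (mmin s) (s i.succ)))
            (down (mmin s) (s 0))).Adj none (some (down (mmin s) (s 0))) := by simp
        rw [key] at htrue
        simpa using htrue
      have hst : (fun i : Fin n => down (mmin s) (s i.succ))
          = (fun i : Fin n => down (mmin s) (t i.succ)) := ih3 _ _ hG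
      funext i
      refine Fin.cases ?_ ?_ i
      · have h1' := succAbove_down (mmin_not_mem s 0)
        have h2' := succAbove_down (mmin_not_mem t 0)
        calc s 0 = (mmin s).succAbove (down (mmin s) (s 0)) := h1'.symm
          _ = (mmin s).succAbove (down (mmin s) (t 0)) := by rw [hw]
          _ = t 0 := by rw [hm]; exact h2'
      · intro j
        have hj := congrFun hst j
        try simp only [] at hj
        have h1' := succAbove_down (mmin_not_mem s j.succ)
        have h2' := succAbove_down (mmin_not_mem t j.succ)
        calc s j.succ = (mmin s).succAbove (down (mmin s) (s j.succ)) := h1'.symm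
          _ = (mmin s).succAbove (down (mmin s) (t j.succ)) := by rw [hj]
          _ = t j.succ := by rw [hm]; exact h2'
    have h4 : ∀ T : SimpleGraph (Fin (n+3)), T.IsTree → ∃ s, decode (n+1) s = T := by
      intro T hT
      have hcard : (2:ℕ) ≤ Fintype.card (Fin (n+3)) := by simp
      set L := univ.filter (fun v : Fin (n+3) => (T.neighborSet v).ncard = 1) with hL
      have hLne : L.Nonempty := by
        obtain ⟨v, hv⟩ := exists_leaf hT hcard
        exact ⟨v, Finset.mem_filter.mpr ⟨mem_univ v, hv⟩⟩
      set l := L.min' hLne with hldef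
      have hdeg1 : (T.neighborSet l).ncard = 1 := (Finset.mem_filter.mp (L.min'_mem hLne)).2
      obtain ⟨w, hadjT⟩ := exists_unique_nbr_of_ncard_one hdeg1
      have hadjlw : T.Adj l w := (hadjT w).mpr rfl
      have hwl : w ≠ l := hadjlw.ne'
      have hTH : T = (T.comap ((finSuccEquiv' l).symm : Option (Fin (n+2)) → Fin (n+3))).comap
          ((finSuccEquiv' l : Fin (n+3) → Option (Fin (n+2)))) := by
        have := comap_equiv_symm_comap (finSuccEquiv' l).symm T
        rw [Equiv.symm_symm] at this
        exact this.symm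
      set H := T.comap ((finSuccEquiv' l).symm : Option (Fin (n+2)) → Fin (n+3)) with hHdef
      have hHtree : H.IsTree := isTree_comap_equiv (finSuccEquiv' l).symm hT
      have hadjH : ∀ x, H.Adj none x ↔ x = some (down l w) := by
        intro x
        have hiff : H.Adj none x ↔ T.Adj ((finSuccEquiv' l).symm none) ((finSuccEquiv' l).symm x) :=
          Iff.rfl
        rw [hiff, finSuccEquiv'_symm_none, hadjT]
        constructor
        · intro hx
          have hxe : x = finSuccEquiv' l w := by
            rw [← hx, Equiv.apply_symm_apply]
          rw [hxe, finSuccEquiv'_eq_some hwl]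
        · intro hx
          rw [hx, finSuccEquiv'_symm_some, succAbove_down hwl]
      have hG0tree : (H.comap (some : Fin (n+2) → Option (Fin (n+2)))).IsTree :=
        comap_some_isTree hHtree hadjH
      have hHeq : H = addLeaf (H.comap (some : Fin (n+2) → Option (Fin (n+2)))) (down l w) :=
        eq_addLeaf hadjH
      obtain ⟨s', hs'⟩ := ih4 _ hG0tree
      set s : Fin (n+1) → Fin (n+3) := Fin.cons w (fun i => l.succAbove (s' i)) with hsdef
      have hs0 : s 0 = w := rfl
      have hssucc : ∀ i : Fin n, s i.succ = l.succAbove (s' i) := fun i => Fin.cons_succ _ _ i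
      have hnotmem : ∀ i, s i ≠ l := by
        intro i
        refine Fin.cases ?_ ?_ i
        · rw [hs0]; exact hwl
        · intro j
          rw [hssucc]
          exact Fin.succAbove_ne l (s' j)
      have hminle : ∀ x, (∀ i, s i ≠ x) → l ≤ x := by
        intro x hx
        by_contra hlt
        push_neg at hlt
        have hxL : x ∉ L := fun hmem => absurd (Finset.min'_le L x hmem) (not_le.mpr hlt)
        have hx1 : 1 ≤ (T.neighborSet x).ncard := degree_pos_of_tree hT hcard x
        have hx2 : 2 ≤ (T.neighborSet x).ncard := by
          rcases Nat.lt_or_ge (T.neighborSet x).ncard 2 with hc | hc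
          · exfalso
            apply hxL
            rw [hL, Finset.mem_filter]
            exact ⟨mem_univ x, by omega⟩
          · exact hc
        have hxw : x ≠ w := by
          intro hh
          exact hx 0 (by rw [hs0, hh])
        have hxl : x ≠ l := ne_of_lt hlt
        have hdx : (T.neighborSet x).ncard
            = ((addLeaf (H.comap (some : Fin (n+2) → Option (Fin (n+2)))) (down l w)).neighborSet
                (finSuccEquiv' l x)).ncard := by
          conv_lhs => rw [hTH]
          rw [ncard_comap_equiv, ← hHeq]
        rw [finSuccEquiv'_eq_some hxl, ncard_addLeaf_some] at hdx
        have hne_w' : down l x ≠ down l w := fun hh => hxw (down_inj hxl hwl hh)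
        rw [if_neg hne_w', add_zero, ← hs', ih2] at hdx
        have hpos : 0 < (univ.filter fun i => s' i = down l x).card := by omega
        obtain ⟨j, hj⟩ := Finset.card_pos.mp hpos
        have hsj : s' j = down l x := (Finset.mem_filter.mp hj).2
        apply hx j.succ
        rw [hssucc, hsj, succAbove_down hxl]
      have hmm : mmin s = l :=
        le_antisymm (mmin_le s hnotmem) (hminle (mmin s) (mmin_not_mem s))
      refine ⟨s, ?_⟩
      rw [decode_succ, hmm]
      have hdown : (fun i : Fin n => down l (s i.succ)) = s' := by
        funext i
        rw [hssucc, down_succAbove]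
      rw [hdown, hs0, hs']
      rw [← hHeq]
      exact hTH.symm
    exact ⟨h1, h2, h3, h4⟩

end PruferAux

open PruferAux

/-- for every `n ≥ 2` and every vertex `v` of `K_n`,
`Σ_{T spanning tree of K_n} 2 ^ deg_T(v) = 2 · (n+1) ^ (n−2)`, the number of spanning trees
of `K_{n+1}` containing a fixed edge. -/
theorem sum_two_pow_degree_spanning_trees (n : ℕ) (hn : 2 ≤ n) (v : Fin n) :
    ∑ᶠ (T : SimpleGraph (Fin n)) (_ : T.IsTree),
        (2 : ℕ) ^ Set.ncard {w : Fin n | T.Adj v w} =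
      2 * (n + 1) ^ (n - 2) := by
  classical
  obtain ⟨m, rfl⟩ : ∃ m, n = m + 2 := ⟨n - 2, by omega⟩
  obtain ⟨h1, h2, h3, h4⟩ := decode_props m
  have hstep1 : ∑ᶠ (T : SimpleGraph (Fin (m+2))) (_ : T.IsTree),
      (2 : ℕ) ^ Set.ncard {w : Fin (m+2) | T.Adj v w}
      = ∑ T : SimpleGraph (Fin (m+2)),
          (if T.IsTree then (2 : ℕ) ^ Set.ncard {w : Fin (m+2) | T.Adj v w} else 0) := by
    have : ∀ T : SimpleGraph (Fin (m+2)),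
        (∑ᶠ _ : T.IsTree, (2 : ℕ) ^ Set.ncard {w : Fin (m+2) | T.Adj v w})
        = (if T.IsTree then (2 : ℕ) ^ Set.ncard {w : Fin (m+2) | T.Adj v w} else 0) :=
      fun T => finsum_eq_if
    rw [finsum_congr this, finsum_eq_sum_of_fintype]
  rw [hstep1, ← Finset.sum_filter]
  have hstep2 : ∑ T ∈ univ.filter (fun T : SimpleGraph (Fin (m+2)) => T.IsTree),
      (2 : ℕ) ^ Set.ncard {w : Fin (m+2) | T.Adj v w}
      = ∑ s : Fin m → Fin (m+2), (2 : ℕ) ^ Set.ncard {w : Fin (m+2) | (decode m s).Adj v w} := by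
    symm
    apply Finset.sum_bij (fun (s : Fin m → Fin (m+2)) _ => decode m s)
    · intro s _
      exact Finset.mem_filter.mpr ⟨mem_univ _, h1 s⟩
    · intro s _ t _ hst
      exact h3 s t hst
    · intro T hT
      obtain ⟨s, hs⟩ := h4 T (Finset.mem_filter.mp hT).2
      exact ⟨s, mem_univ s, hs⟩
    · intro s _
      rfl
  rw [hstep2]
  have hset : ∀ (s : Fin m → Fin (m+2)),
      {w : Fin (m+2) | (decode m s).Adj v w} = (decode m s).neighborSet v := fun s => rfl
  have hcount : ∀ s : Fin m → Fin (m+2),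
      Set.ncard {w : Fin (m+2) | (decode m s).Adj v w}
        = 1 + (univ.filter fun i => s i = v).card := by
    intro s
    rw [hset s, h2 s v]
  have hstep3 : ∀ s : Fin m → Fin (m+2),
      (2 : ℕ) ^ Set.ncard {w : Fin (m+2) | (decode m s).Adj v w}
        = 2 * ∏ i : Fin m, (if s i = v then 2 else 1) := by
    intro s
    rw [hcount s, pow_add, pow_one]
    congr 1
    rw [Finset.prod_ite, Finset.prod_const, Finset.prod_const, one_pow, mul_one]
  rw [Finset.sum_congr rfl fun s _ => hstep3 s, ← Finset.mul_sum]
  have hstep4 : ∑ s : Fin m → Fin (m+2), ∏ i : Fin m, (if s i = v then (2:ℕ) else 1)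
      = (m + 3) ^ m := by
    have := Finset.sum_prod_piFinset (univ : Finset (Fin (m+2)))
      (fun (_ : Fin m) (j : Fin (m+2)) => if j = v then (2:ℕ) else 1)
    rw [Fintype.piFinset_univ] at this
    rw [this]
    have hcol : ∑ j : Fin (m+2), (if j = v then (2:ℕ) else 1) = m + 3 := by
      have hfun : ∀ j : Fin (m+2), (if j = v then (2:ℕ) else 1)
          = 1 + (if j = v then 1 else 0) := by
        intro j
        by_cases h : j = v <;> simp [h]
      rw [Finset.sum_congr rfl fun j _ => hfun j, Finset.sum_add_distrib,
        Finset.sum_ite_eq' univ v (fun _ => (1:ℕ))]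
      simp
    rw [Finset.prod_congr rfl fun i _ => hcol, Finset.prod_const, card_univ]
    simp
  rw [hstep4]
  norm_num
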